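/- Let n ≥ 2, let α > 1, let a ∈ ℝ, let w : {1,…,n} → ℝ be nonnegative weights with Σ_{i=1}^n w_i = 1, and let ψ : {1,…,n} → ℝ satisfy |ψ(r+1) − ψ(r)| ≤ C·r^{−α} for all integers 1 ≤ r ≤ n−1, where C ≥ 0. For each permutation π of {1,…,n} define q_π = σ(a + Σ_{i=1}^n w_i·ψ(π(i))), and let q̄ be the average of q_π over all n! permutations. Then E_π|q_π − q̄| ≤ (C/4)·ζ(α), a bound independent of n, where ζ is the Riemann zeta function and the expectation is the uniform average over all permutations. -/

import Mathlib

/-- The Riemann zeta function for real argument, `ζ(α) = ∑_{t=1}^∞ t^{−α}` (converges for `α > 1`). -/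
noncomputable def zetaR (α : ℝ) : ℝ := ∑' t : ℕ, ((t : ℝ) + 1) ^ (-α)

/-- The logistic (sigmoid) function `σ(t) = 1 / (1 + e^{-t})`. -/
noncomputable def logistic (t : ℝ) : ℝ := 1 / (1 + Real.exp (-t))

/-- The prediction under permutation `π`: `q_π = σ(a + ∑_i w_i·ψ(pos_π(i)))`, where the
position of chunk `i` in `{1,…,n}` is encoded as `(π i : ℕ) + 1`. -/
noncomputable def qperm (n : ℕ) (a : ℝ) (w : Fin n → ℝ) (ψ : ℕ → ℝ)
    (π : Equiv.Perm (Fin n)) : ℝ :=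
  logistic (a + ∑ i : Fin n, w i * ψ ((π i : ℕ) + 1))


lemma logistic_hasDerivAt (x : ℝ) :
    HasDerivAt logistic (Real.exp (-x) / (1 + Real.exp (-x)) ^ 2) x := by
  have h1 : HasDerivAt (fun t : ℝ => 1 + Real.exp (-t)) (-Real.exp (-x)) x := by
    have : HasDerivAt (fun t : ℝ => Real.exp (-t)) (Real.exp (-x) * (-1)) x :=
      ((hasDerivAt_id x).neg).exp
    simpa using this.const_add 1
  have hne : (1 : ℝ) + Real.exp (-x) ≠ 0 := by positivity
  have := h1.inv hne
  have heq : logistic = fun t : ℝ => (1 + Real.exp (-t))⁻¹ := by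
    funext t; simp [logistic, one_div]
  rw [heq]
  exact this.congr_deriv (by ring)

lemma logistic_lip (x y : ℝ) : |logistic x - logistic y| ≤ (1 / 4) * |x - y| := by
  have key : ∀ z ∈ Set.univ, ‖Real.exp (-z) / (1 + Real.exp (-z)) ^ 2‖ ≤ (1 / 4 : ℝ) := by
    intro z _
    have h0 : (0:ℝ) < Real.exp (-z) := Real.exp_pos _
    rw [Real.norm_eq_abs, abs_of_nonneg (by positivity)]
    rw [div_le_iff₀ (by positivity)]
    nlinarith [sq_nonneg (1 - Real.exp (-z))]
  have := Convex.norm_image_sub_le_of_norm_hasDerivWithin_le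
    (f := logistic) (f' := fun z => Real.exp (-z) / (1 + Real.exp (-z)) ^ 2) (s := Set.univ)
    (fun z _ => (logistic_hasDerivAt z).hasDerivWithinAt) key convex_univ
    (Set.mem_univ y) (Set.mem_univ x)
  simpa [Real.norm_eq_abs] using this

lemma summable_g (α : ℝ) (hα : 1 < α) : Summable (fun u : ℕ => ((u : ℝ) + 1) ^ (-α)) := by
  have h : Summable (fun u : ℕ => ((u : ℝ)) ^ (-α)) :=
    Real.summable_nat_rpow.2 (by linarith)
  have := (summable_nat_add_iff 1).2 h
  refine this.congr fun u => ?_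
  push_cast
  ring_nf

lemma zetaR_nonneg (α : ℝ) : 0 ≤ zetaR α :=
  tsum_nonneg fun t => Real.rpow_nonneg (by positivity) _

lemma psi_bound (n : ℕ) (α : ℝ) (hα : 1 < α) (C : ℝ) (hC : 0 ≤ C) (ψ : ℕ → ℝ)
    (hreg : ∀ r : ℕ, 1 ≤ r → r ≤ n - 1 → |ψ (r + 1) - ψ r| ≤ C * (r : ℝ) ^ (-α))
    (r s : ℕ) (hr : 1 ≤ r) (hrs : r ≤ s) (hs : s ≤ n) :
    |ψ s - ψ r| ≤ C * zetaR α := by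
  have htel : ψ s - ψ r = ∑ t ∈ Finset.Ico r s, (ψ (t + 1) - ψ t) := by
    rw [Finset.sum_Ico_eq_sub _ hrs]
    rw [Finset.sum_range_sub fun i => ψ i, Finset.sum_range_sub fun i => ψ i]
    ring
  rw [htel]
  calc |∑ t ∈ Finset.Ico r s, (ψ (t + 1) - ψ t)|
      ≤ ∑ t ∈ Finset.Ico r s, |ψ (t + 1) - ψ t| := Finset.abs_sum_le_sum_abs _ _
    _ ≤ ∑ t ∈ Finset.Ico r s, C * (t : ℝ) ^ (-α) := by
        refine Finset.sum_le_sum fun t ht => ?_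
        rw [Finset.mem_Ico] at ht
        exact hreg t (le_trans hr ht.1) (by omega)
    _ = C * ∑ t ∈ Finset.Ico r s, (t : ℝ) ^ (-α) := by rw [Finset.mul_sum]
    _ ≤ C * zetaR α := by
        refine mul_le_mul_of_nonneg_left ?_ hC
        have hsum : ∑ t ∈ Finset.Ico r s, (t : ℝ) ^ (-α)
            = ∑ u ∈ Finset.Ico (r - 1) (s - 1), ((u : ℝ) + 1) ^ (-α) := by
          refine Finset.sum_nbij' (fun t => t - 1) (fun u => u + 1) ?_ ?_ ?_ ?_ ?_
          · intro t ht; rw [Finset.mem_Ico] at *; omega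
          · intro u hu; rw [Finset.mem_Ico] at *; omega
          · intro t ht; rw [Finset.mem_Ico] at ht; omega
          · intro u hu; omega
          · intro t ht
            rw [Finset.mem_Ico] at ht
            have h2 : ((t - 1 : ℕ) : ℝ) + 1 = (t : ℝ) := by
              rw [Nat.cast_sub (by omega : 1 ≤ t)]; ring
            rw [h2]
        rw [hsum]
        exact Summable.sum_le_tsum _ (fun u _ => Real.rpow_nonneg (by positivity) _) (summable_g α hα)


/-- **Quantified Martingale Violation, summable decay (α > 1).**
Under the first-order positional sensitivity model with `(α, C)`-regular potential `ψ`,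
the permutation-induced dispersion satisfies `E_π|q_π − q̄| ≤ (C/4)·ζ(α)`, a bound independent of `n`. -/
theorem qmv_summable (n : ℕ) (hn : 2 ≤ n) (α : ℝ) (hα : 1 < α)
    (a : ℝ) (C : ℝ) (hC : 0 ≤ C)
    (w : Fin n → ℝ) (hw0 : ∀ i, 0 ≤ w i) (hw1 : ∑ i, w i = 1) (ψ : ℕ → ℝ)
    (hreg : ∀ r : ℕ, 1 ≤ r → r ≤ n - 1 → |ψ (r + 1) - ψ r| ≤ C * (r : ℝ) ^ (-α)) :
    (1 / (Nat.factorial n : ℝ)) *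
        ∑ π : Equiv.Perm (Fin n),
          |qperm n a w ψ π -
            (1 / (Nat.factorial n : ℝ)) * ∑ π' : Equiv.Perm (Fin n), qperm n a w ψ π'| ≤
      (C / 4) * zetaR α := by
  set B : ℝ := (C / 4) * zetaR α with hB
  have hψ : ∀ r s : ℕ, 1 ≤ r → r ≤ n → 1 ≤ s → s ≤ n → |ψ s - ψ r| ≤ C * zetaR α := by
    intro r s h1 h2 h3 h4
    rcases le_total r s with h | h
    · exact psi_bound n α hα C hC ψ hreg r s h1 h h4
    · rw [abs_sub_comm]; exact psi_bound n α hα C hC ψ hreg s r h3 h h2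
  have hkey : ∀ π π' : Equiv.Perm (Fin n), |qperm n a w ψ π - qperm n a w ψ π'| ≤ B := by
    intro π π'
    have hlip := logistic_lip (a + ∑ i : Fin n, w i * ψ ((π i : ℕ) + 1))
      (a + ∑ i : Fin n, w i * ψ ((π' i : ℕ) + 1))
    have hdiff : |(a + ∑ i : Fin n, w i * ψ ((π i : ℕ) + 1)) -
        (a + ∑ i : Fin n, w i * ψ ((π' i : ℕ) + 1))| ≤ C * zetaR α := by
      have : (a + ∑ i : Fin n, w i * ψ ((π i : ℕ) + 1)) -
          (a + ∑ i : Fin n, w i * ψ ((π' i : ℕ) + 1))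
          = ∑ i : Fin n, w i * (ψ ((π i : ℕ) + 1) - ψ ((π' i : ℕ) + 1)) := by
        simp only [mul_sub, Finset.sum_sub_distrib]; ring
      rw [this]
      calc |∑ i : Fin n, w i * (ψ ((π i : ℕ) + 1) - ψ ((π' i : ℕ) + 1))|
          ≤ ∑ i : Fin n, |w i * (ψ ((π i : ℕ) + 1) - ψ ((π' i : ℕ) + 1))| :=
            Finset.abs_sum_le_sum_abs _ _
        _ ≤ ∑ i : Fin n, w i * (C * zetaR α) := by
            refine Finset.sum_le_sum fun i _ => ?_
            rw [abs_mul, abs_of_nonneg (hw0 i)]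
            refine mul_le_mul_of_nonneg_left ?_ (hw0 i)
            exact hψ _ _ (by omega) (by have := (π' i).isLt; omega)
              (by omega) (by have := (π i).isLt; omega)
        _ = C * zetaR α := by rw [← Finset.sum_mul, hw1, one_mul]
    calc |qperm n a w ψ π - qperm n a w ψ π'|
        ≤ (1/4) * |(a + ∑ i : Fin n, w i * ψ ((π i : ℕ) + 1)) -
            (a + ∑ i : Fin n, w i * ψ ((π' i : ℕ) + 1))| := hlip
      _ ≤ (1/4) * (C * zetaR α) := by linarith
      _ = B := by rw [hB]; ring
  set N : ℝ := (Nat.factorial n : ℝ) with hNdef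
  have hNpos : (0:ℝ) < N := by positivity
  have hcard : (Finset.univ : Finset (Equiv.Perm (Fin n))).card = n.factorial := by
    simp [Fintype.card_perm]
  have hdev : ∀ π : Equiv.Perm (Fin n),
      |qperm n a w ψ π - (1 / N) * ∑ π' : Equiv.Perm (Fin n), qperm n a w ψ π'| ≤ B := by
    intro π
    have : qperm n a w ψ π - (1 / N) * ∑ π' : Equiv.Perm (Fin n), qperm n a w ψ π'
        = (1 / N) * ∑ π' : Equiv.Perm (Fin n), (qperm n a w ψ π - qperm n a w ψ π') := by
      rw [Finset.sum_sub_distrib, Finset.sum_const, hcard]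
      field_simp
      ring
    rw [this, abs_mul, abs_of_nonneg (by positivity : (0:ℝ) ≤ 1 / N)]
    calc (1 / N) * |∑ π' : Equiv.Perm (Fin n), (qperm n a w ψ π - qperm n a w ψ π')|
        ≤ (1 / N) * ∑ π' : Equiv.Perm (Fin n), |qperm n a w ψ π - qperm n a w ψ π'| := by
          refine mul_le_mul_of_nonneg_left (Finset.abs_sum_le_sum_abs _ _) (by positivity)
      _ ≤ (1 / N) * ∑ _π' : Equiv.Perm (Fin n), B := by
          refine mul_le_mul_of_nonneg_left (Finset.sum_le_sum fun π' _ => hkey π π') (by positivity)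
      _ = B := by
          rw [Finset.sum_const, hcard, nsmul_eq_mul, ← hNdef]
          field_simp
  calc (1 / N) * ∑ π : Equiv.Perm (Fin n),
        |qperm n a w ψ π - (1 / N) * ∑ π' : Equiv.Perm (Fin n), qperm n a w ψ π'|
      ≤ (1 / N) * ∑ _π : Equiv.Perm (Fin n), B := by
        refine mul_le_mul_of_nonneg_left (Finset.sum_le_sum fun π _ => hdev π) (by positivity)
    _ = B := by rw [Finset.sum_const, hcard, nsmul_eq_mul, ← hNdef]; field_simp
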